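/- Let D be a measurable space, let k ≥ 1, let A = Fin k be the (finite, discrete) attribute space, let η ≥ 0, let P be a probability measure on D, let a : D → A be measurable, let ρ be a Markov kernel from D to A, and let ν be a probability measure on A such that for every z ∈ D and every set E ⊆ A, (ρ(z))(E) ≤ ν(E) + η. Then ∫_D ρ(z)({a(z)}) dP(z) − max_{â ∈ A} P({z ∈ D : a(z) = â}) ≤ η. -/

import Mathlib

open MeasureTheory ProbabilityTheory

/-- SAI bullet of Theorem 5: `η`-TV privacy bounds the strong
attribute-inference advantage by `η`, with attribute space `Fin k`. -/
theorem stmt_10 {D : Type*} [MeasurableSpace D]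
    (k : ℕ) (hk : 1 ≤ k)
    (η : ℝ) (hη : 0 ≤ η)
    (P : Measure D) [IsProbabilityMeasure P]
    (a : D → Fin k) (ha : Measurable a)
    (ρ : Kernel D (Fin k)) [IsMarkovKernel ρ]
    (ν : Measure (Fin k)) [IsProbabilityMeasure ν]
    (hTV : ∀ z : D, ∀ E : Set (Fin k), (ρ z) E ≤ ν E + ENNReal.ofReal η) :
    (∫ z, ((ρ z) {a z}).toReal ∂P) -
      (⨆ ahat : Fin k, (P {z : D | a z = ahat}).toReal) ≤ η := by
  haveI : NeZero k := ⟨by omega⟩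
  set M : ℝ := ⨆ ahat : Fin k, (P {z : D | a z = ahat}).toReal with hM
  have hMle : ∀ b : Fin k, (P {z | a z = b}).toReal ≤ M := fun b =>
    le_ciSup (f := fun ahat : Fin k => (P {z : D | a z = ahat}).toReal)
      (Set.Finite.bddAbove (Set.finite_range _)) b
  have hg_meas : Measurable fun z => (ν {a z}).toReal :=
    (measurable_of_countable fun b : Fin k => (ν {b}).toReal).comp ha
  have hg_int0 : Integrable (fun z => (ν {a z}).toReal) P := by
    refine (integrable_const (1:ℝ)).mono' hg_meas.aestronglyMeasurable ?_
    filter_upwards with z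
    rw [Real.norm_eq_abs, abs_of_nonneg ENNReal.toReal_nonneg]
    calc (ν {a z}).toReal ≤ (ν Set.univ).toReal :=
          ENNReal.toReal_mono (measure_ne_top _ _) (measure_mono (Set.subset_univ _))
      _ = 1 := by simp
  have hg_int : Integrable (fun z => (ν {a z}).toReal + η) P :=
    hg_int0.add (integrable_const η)
  have h1 : (∫ z, ((ρ z) {a z}).toReal ∂P) ≤ ∫ z, ((ν {a z}).toReal + η) ∂P := by
    refine integral_mono_of_nonneg ?_ hg_int ?_
    · filter_upwards with z; exact ENNReal.toReal_nonneg
    · filter_upwards with z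
      have h2 : ((ρ z) {a z}).toReal ≤ (ν {a z} + ENNReal.ofReal η).toReal :=
        ENNReal.toReal_mono (by simp [measure_ne_top]) (hTV z {a z})
      rwa [ENNReal.toReal_add (measure_ne_top _ _) ENNReal.ofReal_ne_top,
        ENNReal.toReal_ofReal hη] at h2
  have h2 : ∫ z, ((ν {a z}).toReal + η) ∂P = (∫ z, (ν {a z}).toReal ∂P) + η := by
    rw [integral_add hg_int0 (integrable_const η)]
    simp
  have hS : ∑ b : Fin k, ν {b} = ν Set.univ := by
    have := sum_measure_preimage_singleton (μ := ν) (f := id) Finset.univ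
      (fun b _ => measurableSet_singleton b)
    simpa using this
  have hsum : ∑ b : Fin k, (ν {b}).toReal = 1 := by
    rw [← ENNReal.toReal_sum (fun _ _ => measure_ne_top _ _), hS]
    simp
  have hMnonneg : 0 ≤ M := le_trans ENNReal.toReal_nonneg (hMle ⟨0, by omega⟩)
  haveI : IsProbabilityMeasure (P.map a) := Measure.isProbabilityMeasure_map ha.aemeasurable
  have h3 : ∫ z, (ν {a z}).toReal ∂P ≤ M := by
    rw [← integral_map ha.aemeasurable
      ((measurable_of_countable fun b : Fin k => (ν {b}).toReal).aestronglyMeasurable)]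
    rw [integral_fintype Integrable.of_finite]
    calc ∑ b : Fin k, ((P.map a) {b}).toReal • (ν {b}).toReal
        ≤ ∑ b : Fin k, M * (ν {b}).toReal := by
          refine Finset.sum_le_sum fun b _ => ?_
          rw [smul_eq_mul]
          refine mul_le_mul_of_nonneg_right ?_ ENNReal.toReal_nonneg
          rw [Measure.map_apply ha (measurableSet_singleton b)]
          exact hMle b
      _ = M := by rw [← Finset.mul_sum, hsum, mul_one]
  linarith
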